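/- arXiv:nlin/0202035 — 2 statements merged into one kernel-verified Lean document; each statement's English description precedes it below -/
import Mathlib

section
/- Fix integers g ≥ 1 and m with 1 ≤ m ≤ g. Let b_1, …, b_{2g+1} ∈ ℂ, set f(z) := ∏_{i=1}^{2g+1}(z − b_i) and a_k := b_k for k = 1, …, g, and assume a_1, …, a_g are pairwise distinct. Let x_1, …, x_m be pairwise distinct complex numbers with x_i ∉ {b_1, …, b_{2g+1}} and x_i ∉ {a_1, …, a_g} for all i, and let y_1, …, y_m ∈ ℂ satisfy y_i² = f(x_i) (so y_i ≠ 0). Let M be the m×m matrix with M_{k l} = 1/(x_l − a_k), let 𝒬 be the diagonal matrix with entries Q(x_1)/y_1, …, Q(x_m)/y_m, where Q(z) := ∏_{k=1}^{g}(z − a_k), and let 𝒜 be the diagonal matrix with entries Q′(a_1), …, Q′(a_m), where Q′(a_j) := ∏_{1≤k≤g, k≠j}(a_j − a_k). Then M𝒬 is invertible and the (i, j) entry of (M𝒬)⁻¹𝒜 equals y_i · F(a_j) · Q^{(2)}(a_j) / ( F′(x_i) · Q^{(2)}(x_i) · (a_j − x_i) ), where F(z) := ∏_{i=1}^{m}(z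 − x_i), F′(x_i) := ∏_{k≠i}(x_i − x_k) and Q^{(2)}(z) := ∏_{k=m+1}^{g}(z − a_k) (an empty product is 1). -/
open Finset

open Polynomial in
private lemma lagrange_sum_aux {m : ℕ} (x : Fin m → ℂ) (hx : Function.Injective x)
    (P : Polynomial ℂ) (hP : P.degree < (m : ℕ)) (t : ℂ) :
    ∑ i, P.eval (x i) *
      ((∏ l ∈ univ.erase i, (t - x l)) / (∏ l ∈ univ.erase i, (x i - x l))) = P.eval t := by
  have hvs : Set.InjOn x (univ : Finset (Fin m)) := hx.injOn
  have h := Lagrange.eq_interpolate (v := x) hvs (by simpa using hP)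
  have h2 := congrArg (Polynomial.eval t) h
  rw [Lagrange.interpolate_apply, Polynomial.eval_finset_sum] at h2
  rw [h2]
  refine Finset.sum_congr rfl fun i _ => ?_
  rw [eval_mul, eval_C]
  congr 1
  rw [Lagrange.basis, eval_prod]
  simp only [Lagrange.basisDivisor, eval_mul, eval_C, eval_sub, eval_X]
  rw [Finset.prod_mul_distrib, Finset.prod_inv_distrib, div_eq_mul_inv, mul_comm]

/-- Lemma 2.2(3), formula (2.8):
`(M𝒬)⁻¹𝒜 = [ y_i F(a_j) Q²(a_j) / (F'(x_i) Q²(x_i) (a_j - x_i)) ]_{ij}`,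
where `M k l = 1/(x l - a k)`, `𝒬 = diag(Q(x_i)/y_i)`, `𝒜 = diag(Q'(a_j))`,
`Q(z) = ∏_{k=1}^{g} (z - a k)`, `Q²(z) = ∏_{k=m+1}^{g} (z - a k)`,
`F(z) = ∏ (z - x i)`, and `y_i² = f(x_i)` on the curve `y² = f(x)`. -/
theorem cauchy_matrix_formula (g m : ℕ) (hg : 1 ≤ g) (hm : 1 ≤ m) (hmg : m ≤ g)
    (b : Fin (2 * g + 1) → ℂ) (a : Fin g → ℂ)
    (ha : ∀ k : Fin g, a k = b (Fin.castLE (by omega) k))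
    (hainj : Function.Injective a)
    (x : Fin m → ℂ) (hxinj : Function.Injective x)
    (hxb : ∀ i k, x i ≠ b k) (hxa : ∀ i k, x i ≠ a k)
    (y : Fin m → ℂ) (hy : ∀ i, (y i) ^ 2 = ∏ k, (x i - b k))
    (M Q A : Matrix (Fin m) (Fin m) ℂ)
    (hM : ∀ k l, M k l = 1 / (x l - a (Fin.castLE hmg k)))
    (hQ : Q = Matrix.diagonal fun i => (∏ k : Fin g, (x i - a k)) / y i)
    (hA : A = Matrix.diagonal fun j =>
      ∏ k ∈ Finset.univ.erase (Fin.castLE hmg j), (a (Fin.castLE hmg j) - a k)) :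
    IsUnit (M * Q) ∧ ∀ i j, ((M * Q)⁻¹ * A) i j =
      y i * (∏ k : Fin m, (a (Fin.castLE hmg j) - x k)) *
          (∏ k ∈ Finset.univ.filter fun k : Fin g => m ≤ (k : ℕ),
            (a (Fin.castLE hmg j) - a k)) /
        ((∏ k ∈ Finset.univ.erase i, (x i - x k)) *
          (∏ k ∈ Finset.univ.filter fun k : Fin g => m ≤ (k : ℕ), (x i - a k)) *
          (a (Fin.castLE hmg j) - x i)) := by
  classical
  set a' : Fin m → ℂ := fun k => a (Fin.castLE hmg k) with ha'
  have ha'inj : Function.Injective a' :=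
    fun u v h => Fin.castLE_injective hmg (hainj h)
  have hset : (univ : Finset (Fin g)).filter (fun l : Fin g => (l : ℕ) < m) =
      univ.map (Fin.castLEEmb hmg) := by
    ext l
    simp only [mem_filter, mem_univ, true_and, Finset.mem_map, Fin.castLEEmb_apply]
    constructor
    · intro hl; exact ⟨⟨(l : ℕ), hl⟩, Fin.ext rfl⟩
    · rintro ⟨u, rfl⟩; exact u.isLt
  -- nonvanishing facts
  have hy0 : ∀ i, y i ≠ 0 := by
    intro i h
    have := hy i
    rw [h] at this
    have hz : (0 : ℂ) = ∏ k, (x i - b k) := by simpa using this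
    exact (Finset.prod_ne_zero_iff.2 fun k _ => sub_ne_zero_of_ne (hxb i k)) hz.symm
  have hF' : ∀ i, (∏ l ∈ univ.erase i, (x i - x l)) ≠ 0 := fun i =>
    Finset.prod_ne_zero_iff.2 fun l hl =>
      sub_ne_zero_of_ne fun h => (Finset.mem_erase.1 hl).1 (hxinj h).symm
  have hQ2x : ∀ i, (∏ l ∈ univ.filter fun l : Fin g => m ≤ (l : ℕ), (x i - a l)) ≠ 0 :=
    fun i => Finset.prod_ne_zero_iff.2 fun l _ => sub_ne_zero_of_ne (hxa i l)
  have hajx : ∀ i j, a' j - x i ≠ 0 := fun i j =>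
    sub_ne_zero_of_ne (Ne.symm (hxa i _))
  have hxak : ∀ i k, x i - a' k ≠ 0 := fun i k => sub_ne_zero_of_ne (hxa i _)
  -- product splitting
  have hsplit : ∀ (t : ℂ) (k : Fin m), (∏ l : Fin g, (t - a l)) =
      ((t - a' k) * ∏ l ∈ univ.erase k, (t - a' l)) *
        (∏ l ∈ univ.filter fun l : Fin g => m ≤ (l : ℕ), (t - a l)) := by
    intro t k
    have h1 := Finset.prod_filter_mul_prod_filter_not (univ : Finset (Fin g))
      (fun l : Fin g => (l : ℕ) < m) (fun l => (t - a l))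
    rw [← h1]
    congr 1
    · rw [hset, Finset.prod_map]
      simp only [Fin.castLEEmb_apply]
      exact (Finset.mul_prod_erase univ (fun l => (t - a' l)) (mem_univ k)).symm
    · apply Finset.prod_congr _ fun _ _ => rfl
      ext l
      simp [not_lt]
  -- the candidate inverse (times A)
  set G : Matrix (Fin m) (Fin m) ℂ := Matrix.of fun i j =>
      y i * (∏ k : Fin m, (a' j - x k)) *
          (∏ k ∈ Finset.univ.filter fun k : Fin g => m ≤ (k : ℕ), (a' j - a k)) /
        ((∏ k ∈ Finset.univ.erase i, (x i - x k)) *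
          (∏ k ∈ Finset.univ.filter fun k : Fin g => m ≤ (k : ℕ), (x i - a k)) *
          (a' j - x i)) with hG
  -- main computation
  have hMQG : (M * Q) * G = A := by
    ext k j
    rw [hQ, hA, Matrix.mul_apply]
    simp only [Matrix.mul_diagonal]
    set Pk : Polynomial ℂ := ∏ l ∈ univ.erase k, (Polynomial.X - Polynomial.C (a' l)) with hPk
    have hPkeval : ∀ t : ℂ, Pk.eval t = ∏ l ∈ univ.erase k, (t - a' l) := by
      intro t; rw [hPk, Polynomial.eval_prod]; simp
    have hPkdeg : Pk.degree < (m : ℕ) := by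
      have h1 : Pk.natDegree = m - 1 := by
        rw [hPk, Polynomial.natDegree_prod _ _ fun l _ => Polynomial.X_sub_C_ne_zero (a' l)]
        simp [Polynomial.natDegree_X_sub_C]
      calc Pk.degree ≤ (Pk.natDegree : WithBot ℕ) := Polynomial.degree_le_natDegree
        _ < (m : ℕ) := by rw [h1]; exact_mod_cast Nat.sub_lt (by omega) one_pos
    have hterm : ∀ i, M k i * ((∏ l : Fin g, (x i - a l)) / y i) * G i j =
        (∏ l ∈ univ.filter fun l : Fin g => m ≤ (l : ℕ), (a' j - a l)) *
          (Pk.eval (x i) *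
            ((∏ l ∈ univ.erase i, (a' j - x l)) / (∏ l ∈ univ.erase i, (x i - x l)))) := by
      intro i
      rw [hM, hPkeval, hsplit (x i) k, hG]
      have hF : (∏ l : Fin m, (a' j - x l)) =
          (a' j - x i) * ∏ l ∈ univ.erase i, (a' j - x l) :=
        (Finset.mul_prod_erase univ (fun l => (a' j - x l)) (mem_univ i)).symm
      simp only [Matrix.of_apply]
      rw [hF]
      rw [show a (Fin.castLE hmg k) = a' k from rfl]
      field_simp [hF' i, hQ2x i, hy0 i, hajx i j, hxak i k]
    calc ∑ i, M k i * ((∏ l : Fin g, (x i - a l)) / y i) * G i j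
        = ∑ i, (∏ l ∈ univ.filter fun l : Fin g => m ≤ (l : ℕ), (a' j - a l)) *
            (Pk.eval (x i) *
              ((∏ l ∈ univ.erase i, (a' j - x l)) / (∏ l ∈ univ.erase i, (x i - x l)))) :=
          Finset.sum_congr rfl fun i _ => hterm i
      _ = (∏ l ∈ univ.filter fun l : Fin g => m ≤ (l : ℕ), (a' j - a l)) * Pk.eval (a' j) := by
          rw [← Finset.mul_sum, lagrange_sum_aux x hxinj Pk hPkdeg (a' j)]
      _ = Matrix.diagonal (fun j =>
            ∏ l ∈ Finset.univ.erase (Fin.castLE hmg j), (a (Fin.castLE hmg j) - a l)) k j := by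
          rcases eq_or_ne k j with rfl | hkj
          · rw [Matrix.diagonal_apply_eq]
            rw [hPkeval]
            have hsub : ((univ : Finset (Fin g)).erase (Fin.castLE hmg k)) =
                ((univ.erase k).map (Fin.castLEEmb hmg)) ∪
                  (univ.filter fun l : Fin g => m ≤ (l : ℕ)) := by
              ext l
              simp only [mem_erase, mem_univ, and_true, mem_union, Finset.mem_map,
                mem_filter, true_and, Fin.castLEEmb_apply]
              constructor
              · intro hl
                rcases lt_or_ge (l : ℕ) m with h | h
                · refine Or.inl ⟨⟨(l : ℕ), h⟩, ?_, Fin.ext rfl⟩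
                  intro he
                  apply hl
                  rw [← he]
                  exact Fin.ext rfl
                · exact Or.inr h
              · rintro (⟨u, hu, rfl⟩ | h)
                · intro he
                  exact hu (Fin.castLE_injective hmg he)
                · intro he
                  rw [he] at h
                  simp only [Fin.coe_castLE] at h
                  omega
            have hdisj : Disjoint ((univ.erase k).map (Fin.castLEEmb hmg))
                (univ.filter fun l : Fin g => m ≤ (l : ℕ)) := by
              rw [Finset.disjoint_left]
              rintro l hl hl2
              simp only [Finset.mem_map, Fin.castLEEmb_apply] at hl
              obtain ⟨u, _, rfl⟩ := hl
              simp only [mem_filter, Fin.coe_castLE] at hl2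
              omega
            rw [hsub, Finset.prod_union hdisj, Finset.prod_map]
            simp only [Fin.castLEEmb_apply]
            ring
          · rw [Matrix.diagonal_apply_ne _ hkj]
            have : Pk.eval (a' j) = 0 := by
              rw [hPkeval]
              exact Finset.prod_eq_zero (Finset.mem_erase.2 ⟨Ne.symm hkj, mem_univ j⟩)
                (sub_self _)
            rw [this, mul_zero]
  -- A is invertible
  have hAdet : IsUnit A.det := by
    rw [hA, Matrix.det_diagonal]
    refine isUnit_iff_ne_zero.2 (Finset.prod_ne_zero_iff.2 fun j _ =>
      Finset.prod_ne_zero_iff.2 fun l hl => sub_ne_zero_of_ne fun h => ?_)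
    exact (Finset.mem_erase.1 hl).1 (hainj h).symm
  have hMQdet : IsUnit (M * Q).det := by
    have : (M * Q).det * G.det = A.det := by rw [← Matrix.det_mul, hMQG]
    exact isUnit_of_mul_isUnit_left (this ▸ hAdet)
  have hInv : (M * Q)⁻¹ * A = G := by
    rw [← hMQG, ← Matrix.mul_assoc, Matrix.nonsing_inv_mul _ hMQdet, Matrix.one_mul]
  refine ⟨(Matrix.isUnit_iff_isUnit_det _).2 hMQdet, fun i j => ?_⟩
  rw [hInv]
  rfl
end

section
/- Fix integers g ≥ 1 and m with 2 ≤ m ≤ g. Let b_1, …, b_{2g+1} ∈ ℂ, set f(z) := ∏_{i=1}^{2g+1}(z − b_i) and a_k := b_k for k = 1, …, g, and assume the points a_1, a_2, a_{m+1}, …, a_g are pairwise distinct. Let x_1, …, x_m be pairwise distinct complex numbers with x_i ∉ {a_1, a_2, a_{m+1}, …, a_g} for all i. Set F(z) := ∏_{i=1}^{m}(z − x_i), let F′ denote its derivative polynomial, Q^{(2)}(z) := ∏_{k=m+1}^{g}(z − a_k) (empty product = 1), Q^{(2)′}(a_k) := ∏_{m+1≤l≤g, l≠k}(a_k − a_l),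 and define, on a neighborhood of each x_i on which the denominator is nonvanishing, the function G(z) := f(z) / ( (z − a_1)² (z − a_2)² Q^{(2)}(z)² F′(z) ). Then Σ_{i=1}^{m} G′(x_i)/F′(x_i) = − [ f′(a_1)/( (a_1 − a_2)² F(a_1)² Q^{(2)}(a_1)² ) + f′(a_2)/( (a_1 − a_2)² F(a_2)² Q^{(2)}(a_2)² ) + Σ_{k=m+1}^{g} f′(a_k)/( (a_k − a_1)² (a_k − a_2)² F(a_k)² Q^{(2)′}(a_k)² ) ], where G′ is the complex derivative of G and f′ the derivative polynomial of f. (Equivalently: the sum over all poles in ℂ of the residues of the rational function f(z)/((z − a_1)²(z − a_2)² F(z)² Q^{(2)}(z)²) vanishes, its residue at each double pole x_i being G′(x_i)/F′(x_i), and there is no residue at infinity.) -/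
open Finset

open Polynomial


lemma sq_dvd_of_root_of_root_derivative {q : ℂ[X]} {c : ℂ}
    (h1 : q.eval c = 0) (h2 : q.derivative.eval c = 0) : (X - C c) ^ 2 ∣ q := by
  obtain ⟨e, he⟩ := (dvd_iff_isRoot).2 h1
  have hd : q.derivative = e + (X - C c) * e.derivative := by
    rw [he, derivative_mul, derivative_X_sub_C, one_mul]
  have he0 : e.eval c = 0 := by
    have := h2
    rw [hd] at this
    simpa using this
  obtain ⟨e', he'⟩ := (dvd_iff_isRoot).2 he0
  refine ⟨e', ?_⟩
  rw [he, he', sq]; ring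

lemma key_residue_sum {ι : Type*} [Fintype ι] [DecidableEq ι] (p : ι → ℂ)
    (hp : Function.Injective p) (P : ℂ[X])
    (hdeg : P.natDegree + 3 ≤ 2 * Fintype.card ι) :
    ∑ j, (P.derivative.eval (p j) *
            (∏ l ∈ Finset.univ.erase j, (X - C (p l)) : ℂ[X]).eval (p j)
          - 2 * P.eval (p j) *
            (Polynomial.derivative (∏ l ∈ Finset.univ.erase j, (X - C (p l)))).eval (p j))
        / ((∏ l ∈ Finset.univ.erase j, (X - C (p l)) : ℂ[X]).eval (p j)) ^ 3 = 0 := by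
  classical
  set n := Fintype.card ι with hn
  have hn2 : 2 ≤ n := by omega
  set V : ι → ℂ[X] := fun j => ∏ l ∈ Finset.univ.erase j, (X - C (p l)) with hV
  set w : ι → ℂ := fun j => (V j).eval (p j) with hwdef
  set v : ι → ℂ := fun j => ((V j).derivative).eval (p j) with hvdef
  have hw : ∀ j, w j ≠ 0 := by
    intro j
    simp only [hwdef, hV, eval_prod, eval_sub, eval_X, eval_C]
    exact Finset.prod_ne_zero_iff.2 fun l hl =>
      sub_ne_zero.2 fun h => ((Finset.mem_erase.1 hl).1 (hp h.symm)).elim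
  set B : ι → ℂ := fun j =>
    (P.derivative.eval (p j) * w j - 2 * P.eval (p j) * v j) / w j ^ 3 with hB
  set A : ι → ℂ := fun j => P.eval (p j) / w j ^ 2 with hA
  set S : ℂ[X] := ∑ j, (C (A j) + C (B j) * (X - C (p j))) * (V j) ^ 2 with hS
  have hVmonic : ∀ j, (V j).Monic := fun j =>
    monic_prod_of_monic _ _ fun l _ => monic_X_sub_C _
  have hVdeg : ∀ j, (V j).natDegree = n - 1 := by
    intro j
    rw [hV]
    simp only
    rw [natDegree_prod _ _ (fun l _ => X_sub_C_ne_zero _)]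
    simp [Finset.card_erase_of_mem, hn]
  have hVeval0 : ∀ j k, j ≠ k → (V j).eval (p k) = 0 := by
    intro j k hjk
    rw [hV]
    simp only [eval_prod]
    apply Finset.prod_eq_zero (Finset.mem_erase.2 ⟨fun h => hjk h.symm, Finset.mem_univ _⟩)
    simp
  -- value of S at p k
  have hSeval : ∀ k, S.eval (p k) = P.eval (p k) := by
    intro k
    rw [hS, eval_finset_sum, Finset.sum_eq_single k]
    · simp only [eval_mul, eval_add, eval_C, eval_sub, eval_X, sub_self, mul_zero,
        add_zero, eval_pow, ← hwdef]
      rw [show eval (p k) (V k) = w k from rfl, hA]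
      field_simp [hw k]
    · intro j _ hjk
      simp [eval_mul, eval_pow, hVeval0 j k hjk]
    · simp
  -- derivative of S at p k
  have hSderiv : ∀ k, S.derivative.eval (p k) = P.derivative.eval (p k) := by
    intro k
    rw [hS, derivative_sum, eval_finset_sum, Finset.sum_eq_single k]
    · rw [derivative_mul, derivative_pow]
      simp only [derivative_add, derivative_C, derivative_mul, derivative_X_sub_C,
        zero_add, mul_one, zero_mul, add_zero, eval_add, eval_mul, eval_C, eval_pow,
        eval_sub, eval_X, sub_self, mul_zero, eval_natCast, Nat.cast_ofNat, pow_one,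
        ← hwdef, ← hvdef]
      rw [show eval (p k) (V k) = w k from rfl, show eval (p k) (derivative (V k)) = v k from rfl,
        hA, hB]
      field_simp [hw k]
      ring
    · intro j _ hjk
      rw [derivative_mul, derivative_pow]
      simp [eval_mul, eval_pow, hVeval0 j k hjk]
    · simp
  have hPS : P = S := by
    have hdvd : (∏ k, (X - C (p k)) ^ 2) ∣ (P - S) := by
      apply Finset.prod_dvd_of_coprime
      · intro i _ j _ hij
        exact ((pairwise_coprime_X_sub_C hp hij).pow : IsCoprime _ _)
      · intro k _
        exact sq_dvd_of_root_of_root_derivative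
          (by rw [eval_sub, hSeval, sub_self])
          (by rw [derivative_sub, eval_sub, hSderiv, sub_self])
    have hdegS : S.natDegree ≤ 2 * n - 1 := by
      rw [hS]
      apply natDegree_sum_le_of_forall_le
      intro j _
      apply le_trans (natDegree_mul_le)
      have h1 : (C (A j) + C (B j) * (X - C (p j))).natDegree ≤ 1 := by
        apply le_trans (natDegree_add_le _ _)
        simp only [natDegree_C, max_le_iff]
        constructor
        · omega
        · exact le_trans (natDegree_mul_le) (by simp)
      have h2 : ((V j) ^ 2).natDegree ≤ 2 * n - 2 := by
        rw [natDegree_pow, hVdeg]; omega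
      omega
    have hdegprod : (∏ k : ι, (X - C (p k)) ^ 2).natDegree = 2 * n := by
      rw [natDegree_prod _ _ (fun k _ => pow_ne_zero _ (X_sub_C_ne_zero _))]
      simp [natDegree_pow, hn, mul_comm]
    by_contra hne
    have hPSne : P - S ≠ 0 := sub_ne_zero.2 hne
    have := Polynomial.eq_zero_of_dvd_of_natDegree_lt hdvd ?_
    · exact hPSne this
    · rw [hdegprod]
      calc (P - S).natDegree ≤ max P.natDegree S.natDegree := natDegree_sub_le _ _
        _ < 2 * n := by
            apply max_lt <;> omega
  -- coefficient extraction
  have hco : S.coeff (2 * n - 1) = 0 := by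
    rw [← hPS]
    apply coeff_eq_zero_of_natDegree_lt
    omega
  have hcoS : S.coeff (2 * n - 1) = ∑ j, B j := by
    rw [hS, finset_sum_coeff]
    apply Finset.sum_congr rfl
    intro j _
    have hre : (C (A j) + C (B j) * (X - C (p j))) * (V j) ^ 2
        = C (A j) * (V j) ^ 2 + C (B j) * ((X - C (p j)) * (V j) ^ 2) := by ring
    rw [hre, coeff_add, coeff_C_mul, coeff_C_mul]
    have hc1 : ((V j) ^ 2).coeff (2 * n - 1) = 0 := by
      apply coeff_eq_zero_of_natDegree_lt
      rw [natDegree_pow, hVdeg]; omega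
    have hmon : ((X - C (p j)) * (V j) ^ 2).Monic := (monic_X_sub_C _).mul ((hVmonic j).pow 2)
    have hdeg2 : ((X - C (p j)) * (V j) ^ 2).natDegree = 2 * n - 1 := by
      rw [(monic_X_sub_C _).natDegree_mul ((hVmonic j).pow 2), natDegree_X_sub_C,
        natDegree_pow, hVdeg]
      omega
    have hc2 : ((X - C (p j)) * (V j) ^ 2).coeff (2 * n - 1) = 1 := by
      rw [← hdeg2]; exact hmon.coeff_natDegree
    rw [hc1, hc2, mul_zero, mul_one, zero_add]
  have : ∑ j, B j = 0 := by rw [← hcoS, hco]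
  simpa [hB, hwdef, hvdef] using this

-- generic: product over erased subtype = product over erased filter
lemma prod_erase_subtype {α M : Type*} [Fintype α] [DecidableEq α] [CommMonoid M]
    {P : α → Prop} [DecidablePred P] (h : α → M) (c : {k // P k}) :
    ∏ d ∈ (Finset.univ : Finset {k // P k}).erase c, h d.1
      = ∏ l ∈ Finset.univ.filter P |>.erase c.1, h l := by
  classical
  apply Finset.prod_bij (fun (d : {k // P k}) (_ : _) => d.1)
  · intro d hd
    rw [Finset.mem_erase] at hd ⊢
    exact ⟨fun e => hd.1 (Subtype.ext e), Finset.mem_filter.2 ⟨Finset.mem_univ _, d.2⟩⟩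
  · intro d _ e _ hde
    exact Subtype.ext hde
  · intro l hl
    rw [Finset.mem_erase, Finset.mem_filter] at hl
    exact ⟨⟨l, hl.2.2⟩, Finset.mem_erase.2 ⟨fun e => hl.1 (congrArg Subtype.val e), Finset.mem_univ _⟩, rfl⟩
  · intros; rfl

/-- Lemma 3.2(1): the residue identity obtained by summing the residues of
`f(x) dx / ((x - a₁)²(x - a₂)² F(x)² Q²(x)²)`, where `f(z) = ∏ (z - bᵢ)`,
`a_k = b_k` for `k = 1, …, g`, `F(z) = ∏ (z - xᵢ)`,
`Q²(z) = ∏_{k=m+1}^{g} (z - a_k)`, and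
`G(z) = f(z)/((z - a₁)²(z - a₂)² Q²(z)² F'(z))`. -/
theorem residue_sum_identity (g m : ℕ) (hm : 2 ≤ m) (hmg : m ≤ g)
    (b : Fin (2 * g + 1) → ℂ) (a : Fin g → ℂ)
    (ha : ∀ k : Fin g, a k = b (Fin.castLE (by omega) k))
    (hadist : Set.InjOn a {k : Fin g | (k : ℕ) = 0 ∨ (k : ℕ) = 1 ∨ m ≤ (k : ℕ)})
    (x : Fin m → ℂ) (hxinj : Function.Injective x)
    (hxa : ∀ i, ∀ k : Fin g, ((k : ℕ) = 0 ∨ (k : ℕ) = 1 ∨ m ≤ (k : ℕ)) → x i ≠ a k)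
    (f : ℂ → ℂ) (hf : ∀ z, f z = ∏ i, (z - b i))
    (Fz : ℂ → ℂ) (hFz : ∀ z, Fz z = ∏ i, (z - x i))
    (Q2 : ℂ → ℂ)
    (hQ2 : ∀ z, Q2 z = ∏ k ∈ Finset.univ.filter fun k : Fin g => m ≤ (k : ℕ), (z - a k))
    (G : ℂ → ℂ)
    (hG : ∀ z, G z = f z /
      ((z - a ⟨0, by omega⟩) ^ 2 * (z - a ⟨1, by omega⟩) ^ 2 * (Q2 z) ^ 2 * deriv Fz z)) :
    ∑ i, deriv G (x i) / (∏ k ∈ Finset.univ.erase i, (x i - x k)) =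
      -(deriv f (a ⟨0, by omega⟩) /
          ((a ⟨0, by omega⟩ - a ⟨1, by omega⟩) ^ 2 * (Fz (a ⟨0, by omega⟩)) ^ 2 *
            (Q2 (a ⟨0, by omega⟩)) ^ 2) +
        deriv f (a ⟨1, by omega⟩) /
          ((a ⟨0, by omega⟩ - a ⟨1, by omega⟩) ^ 2 * (Fz (a ⟨1, by omega⟩)) ^ 2 *
            (Q2 (a ⟨1, by omega⟩)) ^ 2) +
        ∑ k ∈ Finset.univ.filter fun k : Fin g => m ≤ (k : ℕ),
          deriv f (a k) /
            ((a k - a ⟨0, by omega⟩) ^ 2 * (a k - a ⟨1, by omega⟩) ^ 2 * (Fz (a k)) ^ 2 *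
              (∏ l ∈ (Finset.univ.filter fun l : Fin g => m ≤ (l : ℕ)).erase k,
                (a k - a l)) ^ 2)) := by
  classical
  -- notation
  set P : Fin g → Prop := fun k => (k : ℕ) = 0 ∨ (k : ℕ) = 1 ∨ m ≤ (k : ℕ) with hPdef
  set κ := {k : Fin g // P k}
  haveI : DecidablePred P := fun k => by unfold P; infer_instance
  set p : Fin m ⊕ κ → ℂ := Sum.elim x (fun c => a c.1) with hpdef
  have hg2 : 2 ≤ g := le_trans hm hmg
  set i0 : Fin g := ⟨0, by omega⟩ with hi0def
  set i1 : Fin g := ⟨1, by omega⟩ with hi1def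
  have hPi0 : P i0 := Or.inl rfl
  have hPi1 : P i1 := Or.inr (Or.inl rfl)
  set k0 : κ := ⟨i0, hPi0⟩
  set k1 : κ := ⟨i1, hPi1⟩
  -- polynomials
  set fp : ℂ[X] := ∏ i, (X - C (b i)) with hfp
  set Fp : ℂ[X] := ∏ i, (X - C (x i)) with hFp
  set Qp : ℂ[X] := ∏ k ∈ Finset.univ.filter fun k : Fin g => m ≤ (k : ℕ), (X - C (a k)) with hQp
  -- function identifications
  have hffun : f = fun z => fp.eval z := by
    funext z; rw [hf]; simp [hfp, eval_prod]
  have hFzfun : Fz = fun z => Fp.eval z := by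
    funext z; rw [hFz]; simp [hFp, eval_prod]
  have hQ2fun : Q2 = fun z => Qp.eval z := by
    funext z; rw [hQ2]; simp [hQp, eval_prod]
  have hderivf : deriv f = fun z => fp.derivative.eval z := by
    rw [hffun]; funext z; exact Polynomial.deriv (p := fp)
  have hderivFz : deriv Fz = fun z => Fp.derivative.eval z := by
    rw [hFzfun]; funext z; exact Polynomial.deriv (p := Fp)
  -- injectivity of p
  have hinj : Function.Injective p := by
    rintro (i | c) (j | d) h
    · exact congrArg Sum.inl (hxinj h)
    · exact absurd h (hxa i d.1 d.2)
    · exact absurd h.symm (hxa j c.1 c.2)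
    · exact congrArg Sum.inr (Subtype.ext (hadist c.2 d.2 h))
  -- pairwise difference nonzero helpers
  have hpne : ∀ j l : Fin m ⊕ κ, j ≠ l → p j - p l ≠ 0 := fun j l hjl =>
    sub_ne_zero.2 fun h => hjl (hinj h)
  -- cardinality
  have hfiltercard : (Finset.univ.filter fun k : Fin g => m ≤ (k : ℕ)).card = g - m := by
    classical
    have hb := Finset.card_bij'
      (s := Finset.univ.filter fun k : Fin g => m ≤ (k : ℕ))
      (t := (Finset.univ : Finset (Fin (g - m))))
      (fun (k : Fin g) (hk : k ∈ _) => (⟨(k : ℕ) - m, by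
        have := (Finset.mem_filter.1 hk).2
        have := k.2
        omega⟩ : Fin (g - m)))
      (fun (j : Fin (g - m)) _ => (⟨m + (j : ℕ), by have := j.2; omega⟩ : Fin g))
      (fun k hk => Finset.mem_univ _)
      (fun j _ => Finset.mem_filter.2 ⟨Finset.mem_univ _, by simp⟩)
      (fun k hk => by
        have := (Finset.mem_filter.1 hk).2
        ext
        simp
        omega)
      (fun j _ => by ext; simp)
    simpa using hb
  -- filter decompositions
  set Sm : Finset (Fin g) := Finset.univ.filter (fun k : Fin g => m ≤ (k : ℕ)) with hSm
  set SP : Finset (Fin g) := Finset.univ.filter P with hSP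
  have hi1nSm : i1 ∉ Sm := by
    simp only [hSm, Finset.mem_filter, hi1def]
    simp
    omega
  have hi0nI : i0 ∉ insert i1 Sm := by
    simp only [Finset.mem_insert, hSm, Finset.mem_filter, hi0def, hi1def]
    simp [Fin.ext_iff]
    omega
  have hSPdecomp : SP = insert i0 (insert i1 Sm) := by
    ext k
    simp only [hSP, hSm, Finset.mem_filter, Finset.mem_insert, Finset.mem_univ, true_and,
      hPdef, hi0def, hi1def, Fin.ext_iff]
  have hSPcard : SP.card = 2 + (g - m) := by
    rw [hSPdecomp, Finset.card_insert_of_notMem hi0nI, Finset.card_insert_of_notMem hi1nSm,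
      hfiltercard]
    omega
  have hcardκ : Fintype.card κ = 2 + (g - m) := by
    have h2 : Fintype.card κ = (Finset.univ.filter P).card := Fintype.card_subtype _
    rw [h2, ← hSP, hSPcard]
  have hcardι : Fintype.card (Fin m ⊕ κ) = g + 2 := by
    have h3 : Fintype.card (Fin m ⊕ κ) = m + Fintype.card κ := by
      simp [Fintype.card_sum]
    rw [h3, hcardκ]
    omega
  have hfpdeg : fp.natDegree = 2 * g + 1 := by
    rw [hfp, natDegree_prod _ _ (fun l _ => X_sub_C_ne_zero _)]
    simp [natDegree_X_sub_C]
  -- the key residue identity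
  set T : Fin m ⊕ κ → ℂ := fun j =>
    (fp.derivative.eval (p j) *
        (∏ l ∈ Finset.univ.erase j, (X - C (p l)) : ℂ[X]).eval (p j)
      - 2 * fp.eval (p j) *
        (Polynomial.derivative (∏ l ∈ Finset.univ.erase j, (X - C (p l)))).eval (p j))
      / ((∏ l ∈ Finset.univ.erase j, (X - C (p l)) : ℂ[X]).eval (p j)) ^ 3 with hT
  have hkey : ∑ j, T j = 0 := by
    exact key_residue_sum p hinj fp (by rw [hfpdeg, hcardι]; omega)
  rw [Fintype.sum_sum_type] at hkey
  -- erase identities on the sum type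
  have herase_inl : ∀ i : Fin m, (Finset.univ : Finset (Fin m ⊕ κ)).erase (Sum.inl i)
      = (Finset.univ.erase i).disjSum Finset.univ := by
    intro i; ext (u | u) <;> simp
  have herase_inr : ∀ c : κ, (Finset.univ : Finset (Fin m ⊕ κ)).erase (Sum.inr c)
      = Finset.univ.disjSum (Finset.univ.erase c) := by
    intro c; ext (u | u) <;> simp
  -- f vanishes at the a-nodes
  have hfa : ∀ c : κ, fp.eval (a c.1) = 0 := by
    intro c
    rw [ha c.1, hfp, eval_prod]
    exact Finset.prod_eq_zero (Finset.mem_univ (Fin.castLE (show g ≤ 2 * g + 1 by omega) c.1))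
      (by simp)
  -- nonvanishing of Fz at the a-nodes
  have hFzane : ∀ c : κ, Fz (a c.1) ≠ 0 := by
    intro c
    rw [hFz]
    exact Finset.prod_ne_zero_iff.2 fun i _ =>
      sub_ne_zero.2 fun h => (hxa i c.1 c.2) h.symm
  have hRane : ∀ c : κ, (∏ l ∈ SP.erase c.1, (a c.1 - a l)) ≠ 0 := by
    intro c
    refine Finset.prod_ne_zero_iff.2 fun l hl => sub_ne_zero.2 fun h => ?_
    rw [Finset.mem_erase, hSP, Finset.mem_filter] at hl
    exact hl.1 (hadist hl.2.2 c.2 h.symm)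
  -- value of the T-terms at the a-nodes
  have hTr : ∀ c : κ, T (Sum.inr c) =
      fp.derivative.eval (a c.1) /
        (Fz (a c.1) * ∏ l ∈ SP.erase c.1, (a c.1 - a l)) ^ 2 := by
    intro c
    have hpc : p (Sum.inr c) = a c.1 := rfl
    have hWeq : (∏ l ∈ (Finset.univ : Finset (Fin m ⊕ κ)).erase (Sum.inr c),
        (X - C (p l)) : ℂ[X]).eval (p (Sum.inr c))
        = Fz (a c.1) * ∏ l ∈ SP.erase c.1, (a c.1 - a l) := by
      rw [eval_prod, herase_inr c, Finset.prod_disjSum, hpc]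
      congr 1
      · rw [hFz]
        exact Finset.prod_congr rfl fun k _ => by simp [hpdef]
      · rw [← prod_erase_subtype (fun l => a c.1 - a l) c]
        exact Finset.prod_congr rfl fun d _ => by simp [hpdef]
    rw [hT]
    simp only
    rw [hWeq, hpc, hfa c]
    have hWne : Fz (a c.1) * ∏ l ∈ SP.erase c.1, (a c.1 - a l) ≠ 0 :=
      mul_ne_zero (hFzane c) (hRane c)
    rw [div_eq_div_iff (pow_ne_zero _ hWne) (pow_ne_zero _ hWne)]
    ring
  -- the sum over a-nodes equals the bracket
  set H : Fin g → ℂ := fun k =>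
    fp.derivative.eval (a k) / (Fz (a k) * ∏ l ∈ SP.erase k, (a k - a l)) ^ 2 with hH
  have hsumr : ∑ c : κ, T (Sum.inr c) =
      deriv f (a i0) / ((a i0 - a i1) ^ 2 * (Fz (a i0)) ^ 2 * (Q2 (a i0)) ^ 2) +
      deriv f (a i1) / ((a i0 - a i1) ^ 2 * (Fz (a i1)) ^ 2 * (Q2 (a i1)) ^ 2) +
      ∑ k ∈ Sm, deriv f (a k) /
        ((a k - a i0) ^ 2 * (a k - a i1) ^ 2 * (Fz (a k)) ^ 2 *
          (∏ l ∈ Sm.erase k, (a k - a l)) ^ 2) := by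
    have step1 : ∑ c : κ, T (Sum.inr c) = ∑ c : κ, H c.1 :=
      Finset.sum_congr rfl fun c _ => by rw [hTr c, hH]
    have step2 : ∑ c : κ, H c.1 = ∑ l ∈ SP, H l :=
      (Finset.sum_subtype SP (fun k => by simp [hSP]) H).symm
    have step3 : ∑ l ∈ SP, H l = H i0 + (H i1 + ∑ l ∈ Sm, H l) := by
      rw [hSPdecomp, Finset.sum_insert hi0nI, Finset.sum_insert hi1nSm]
    have hSPe0 : SP.erase i0 = insert i1 Sm := by
      ext l
      simp only [Finset.mem_erase, hSP, hSm, Finset.mem_filter, Finset.mem_insert,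
        Finset.mem_univ, true_and, hPdef, hi0def, hi1def, Fin.ext_iff, ne_eq]
      omega
    have hSPe1 : SP.erase i1 = insert i0 Sm := by
      ext l
      simp only [Finset.mem_erase, hSP, hSm, Finset.mem_filter, Finset.mem_insert,
        Finset.mem_univ, true_and, hPdef, hi0def, hi1def, Fin.ext_iff, ne_eq]
      omega
    have hH0 : H i0 = deriv f (a i0) /
        ((a i0 - a i1) ^ 2 * (Fz (a i0)) ^ 2 * (Q2 (a i0)) ^ 2) := by
      rw [hH]
      simp only
      rw [hSPe0, Finset.prod_insert hi1nSm, ← hQ2 (a i0), hderivf]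
      rw [show (Fz (a i0) * ((a i0 - a i1) * Q2 (a i0))) ^ 2
        = (a i0 - a i1) ^ 2 * (Fz (a i0)) ^ 2 * (Q2 (a i0)) ^ 2 from by ring]
    have hi0nSm : i0 ∉ Sm := fun h => hi0nI (Finset.mem_insert_of_mem h)
    have hH1 : H i1 = deriv f (a i1) /
        ((a i0 - a i1) ^ 2 * (Fz (a i1)) ^ 2 * (Q2 (a i1)) ^ 2) := by
      rw [hH]
      simp only
      rw [hSPe1, Finset.prod_insert hi0nSm, ← hQ2 (a i1), hderivf]
      rw [show (Fz (a i1) * ((a i1 - a i0) * Q2 (a i1))) ^ 2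
        = (a i0 - a i1) ^ 2 * (Fz (a i1)) ^ 2 * (Q2 (a i1)) ^ 2 from by ring]
    have hHk : ∀ k ∈ Sm, H k = deriv f (a k) /
        ((a k - a i0) ^ 2 * (a k - a i1) ^ 2 * (Fz (a k)) ^ 2 *
          (∏ l ∈ Sm.erase k, (a k - a l)) ^ 2) := by
      intro k hk
      have hkm : m ≤ (k : ℕ) := by
        rw [hSm, Finset.mem_filter] at hk; exact hk.2
      have hSPek : SP.erase k = insert i0 (insert i1 (Sm.erase k)) := by
        ext l
        simp only [Finset.mem_erase, hSP, hSm, Finset.mem_filter, Finset.mem_insert,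
          Finset.mem_univ, true_and, hPdef, hi0def, hi1def, Fin.ext_iff, ne_eq]
        omega
      have hi1n : i1 ∉ Sm.erase k := fun h => hi1nSm (Finset.mem_of_mem_erase h)
      have hi0n : i0 ∉ insert i1 (Sm.erase k) := by
        intro h
        rcases Finset.mem_insert.1 h with h | h
        · rw [hi0def, hi1def] at h; simp [Fin.ext_iff] at h
        · exact hi0nSm (Finset.mem_of_mem_erase h)
      rw [hH]
      simp only
      rw [hSPek, Finset.prod_insert hi0n, Finset.prod_insert hi1n, hderivf]
      rw [show (Fz (a k) * ((a k - a i0) * ((a k - a i1) * ∏ l ∈ Sm.erase k, (a k - a l)))) ^ 2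
        = (a k - a i0) ^ 2 * (a k - a i1) ^ 2 * (Fz (a k)) ^ 2 *
          (∏ l ∈ Sm.erase k, (a k - a l)) ^ 2 from by ring]
    rw [step1, step2, step3, hH0, hH1, Finset.sum_congr rfl hHk]
    ring
  -- the x-node terms
  have hTl : ∀ i : Fin m, T (Sum.inl i) =
      deriv G (x i) / (∏ k ∈ Finset.univ.erase i, (x i - x k)) := by
    intro i
    set Vx : ℂ[X] := ∏ k ∈ Finset.univ.erase i, (X - C (x k)) with hVx
    set Ep : ℂ[X] := ∏ c : κ, (X - C (a c.1)) with hEpdef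
    have hprod_fact : (∏ l ∈ (Finset.univ : Finset (Fin m ⊕ κ)).erase (Sum.inl i),
        (X - C (p l))) = Vx * Ep := by
      rw [herase_inl i, Finset.prod_disjSum]
      rfl
    have hEp_eq : Ep = (X - C (a i0)) * ((X - C (a i1)) * Qp) := by
      have h4 : ∏ l ∈ SP, (X - C (a l)) = ∏ c : κ, (X - C (a c.1)) :=
        Finset.prod_subtype SP (fun k => by simp [hSP]) _
      rw [hEpdef, ← h4, hSPdecomp, Finset.prod_insert hi0nI, Finset.prod_insert hi1nSm, hQp]
    set u := Vx.eval (x i) with hu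
    set u' := Vx.derivative.eval (x i) with hu'
    set e := Ep.eval (x i) with he
    set e' := Ep.derivative.eval (x i) with he'
    have hueq : u = ∏ k ∈ Finset.univ.erase i, (x i - x k) := by
      rw [hu, hVx, eval_prod]; simp
    have hune : u ≠ 0 := by
      rw [hueq]
      exact Finset.prod_ne_zero_iff.2 fun k hk =>
        sub_ne_zero.2 fun hh => (Finset.mem_erase.1 hk).1 (hxinj hh).symm
    have hQpxne : Qp.eval (x i) ≠ 0 := by
      rw [hQp, eval_prod]
      refine Finset.prod_ne_zero_iff.2 fun k hk => ?_
      rw [hSm, Finset.mem_filter] at hk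
      simpa using sub_ne_zero.2 (hxa i k (Or.inr (Or.inr hk.2)))
    have hene : e ≠ 0 := by
      rw [he, hEp_eq, eval_mul, eval_mul]
      refine mul_ne_zero ?_ (mul_ne_zero ?_ hQpxne)
      · simpa using sub_ne_zero.2 (hxa i i0 hPi0)
      · simpa using sub_ne_zero.2 (hxa i i1 hPi1)
    -- G as polynomial quotient
    have hGfun : G = fun z => fp.eval z / (Ep ^ 2 * Fp.derivative).eval z := by
      funext z
      rw [hG z, hffun]
      congr 1
      rw [hQ2fun, hderivFz, hEp_eq]
      simp only [eval_mul, eval_pow, eval_sub, eval_X, eval_C]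
      ring
    have hFpfact : Fp = (X - C (x i)) * Vx := by
      rw [hFp, hVx]
      exact (Finset.mul_prod_erase Finset.univ _ (Finset.mem_univ i)).symm
    have hFp' : Fp.derivative = Vx + (X - C (x i)) * Vx.derivative := by
      rw [hFpfact, derivative_mul, derivative_X_sub_C, one_mul]
    have hFp'eval : Fp.derivative.eval (x i) = u := by
      rw [hFp']; simp [hu]
    have hFp''eval : Fp.derivative.derivative.eval (x i) = 2 * u' := by
      rw [hFp']
      simp only [derivative_add, derivative_mul, derivative_X_sub_C, one_mul, eval_add,
        eval_mul, eval_sub, eval_X, eval_C, sub_self, zero_mul, mul_zero, add_zero]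
      rw [← hu']
      ring
    have hdpne : (Ep ^ 2 * Fp.derivative).eval (x i) ≠ 0 := by
      rw [eval_mul, eval_pow, hFp'eval, ← he]
      exact mul_ne_zero (pow_ne_zero _ hene) hune
    have hderivG : deriv G (x i) =
        (fp.derivative.eval (x i) * (Ep ^ 2 * Fp.derivative).eval (x i)
          - fp.eval (x i) * (Ep ^ 2 * Fp.derivative).derivative.eval (x i))
        / ((Ep ^ 2 * Fp.derivative).eval (x i)) ^ 2 := by
      rw [hGfun, deriv_fun_div (Polynomial.differentiableAt fp)
        (Polynomial.differentiableAt (Ep ^ 2 * Fp.derivative)) hdpne,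
        Polynomial.deriv, Polynomial.deriv]
    have hdpval : (Ep ^ 2 * Fp.derivative).eval (x i) = e ^ 2 * u := by
      rw [eval_mul, eval_pow, hFp'eval, ← he]
    have hdp'val : (Ep ^ 2 * Fp.derivative).derivative.eval (x i)
        = 2 * e * e' * u + e ^ 2 * (2 * u') := by
      rw [derivative_mul, derivative_pow]
      simp only [eval_add, eval_mul, eval_pow, eval_C, hFp'eval, hFp''eval, ← he, ← he',
        Nat.cast_ofNat, eval_ofNat, pow_one]
      ring
    have hxival : p (Sum.inl i) = x i := rfl
    rw [hT]
    simp only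
    rw [hprod_fact, hxival, derivative_mul, eval_mul, eval_add, eval_mul, eval_mul,
      ← hu, ← hu', ← he, ← he']
    rw [hderivG, hdpval, hdp'val, ← hueq]
    field_simp
    ring
  -- assemble
  have hL : ∑ i : Fin m, T (Sum.inl i)
      = ∑ i, deriv G (x i) / (∏ k ∈ Finset.univ.erase i, (x i - x k)) :=
    Finset.sum_congr rfl fun i _ => hTl i
  rw [hL, hsumr] at hkey
  linear_combination hkey
end
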